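/- If a and b are monic real Hurwitz polynomials of degree n and there exists a real polynomial c such that c/a and c/b are both strictly positive real, then every convex combination λb + (1−λ)a, λ ∈ [0,1], is Hurwitz stable. -/

import Mathlib

open Polynomial

/-- A real polynomial is Hurwitz stable if all of its complex roots have
negative real part. -/
def Hurwitz (p : Polynomial ℝ) : Prop :=
  ∀ z : ℂ, (p.map (algebraMap ℝ ℂ)).IsRoot z → z.re < 0

/-- Evaluation of a real polynomial at the purely imaginary number `i ω`. -/
noncomputable def evalI (p : Polynomial ℝ) (ω : ℝ) : ℂ :=
  Polynomial.aeval ((ω : ℂ) * Complex.I) p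

/-- `c / q` is strictly positive real. -/
def SPR (c q : Polynomial ℝ) : Prop :=
  c.degree = q.degree ∧ Hurwitz q ∧ ∀ ω : ℝ, 0 < (evalI c ω / evalI q ω).re

/- ---------- auxiliary lemmas ---------- -/

private lemma aux_pow_le_prod (t : ℝ) (ht : 0 ≤ t) (s : Multiset ℝ) (h : ∀ x ∈ s, t ≤ x) :
    t ^ Multiset.card s ≤ s.prod := by
  induction s using Multiset.induction with
  | empty => simp
  | cons x s ih =>
    simp only [Multiset.card_cons, Multiset.prod_cons, pow_succ]
    have hx := h x (Multiset.mem_cons_self _ _)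
    have hs := ih (fun y hy => h y (Multiset.mem_cons_of_mem hy))
    calc t ^ Multiset.card s * t ≤ s.prod * x :=
          mul_le_mul hs hx ht ((pow_nonneg ht _).trans hs)
      _ = x * s.prod := mul_comm _ _

private lemma aux_norm_msprod (s : Multiset ℂ) : ‖s.prod‖ = (s.map (fun z => ‖z‖)).prod :=
  map_multiset_prod (normHom : ℂ →*₀ ℝ).toMonoidHom s

/-- If a monic complex polynomial is small at `r`, it has a root near `r`. -/
private lemma aux_near_root (q : Polynomial ℂ) (hm : q.Monic) (r : ℂ) (t : ℝ) (ht : 0 < t)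
    (h : ‖q.eval r‖ < t ^ q.natDegree) : ∃ z : ℂ, q.IsRoot z ∧ ‖r - z‖ < t := by
  by_contra hc
  push_neg at hc
  have hsp : Splits q := IsAlgClosed.splits q
  have hcard : Multiset.card q.roots = q.natDegree := splits_iff_card_roots.1 hsp
  have heval : ‖q.eval r‖ = ((q.roots.map (fun z => ‖r - z‖)).prod) := by
    conv_lhs => rw [hsp.eq_prod_roots_of_monic hm]
    rw [eval_multiset_prod, Multiset.map_map, aux_norm_msprod, Multiset.map_map]
    congr 1
    apply Multiset.map_congr rfl
    intro x _
    simp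
  have hle : t ^ q.natDegree ≤ (q.roots.map (fun z => ‖r - z‖)).prod := by
    rw [← hcard, ← Multiset.card_map (fun z => ‖r - z‖) q.roots]
    apply aux_pow_le_prod t ht.le
    intro x hx
    obtain ⟨z, hz, rfl⟩ := Multiset.mem_map.1 hx
    exact hc z (isRoot_of_mem_roots hz)
  rw [heval] at h
  linarith

private lemma aux_eval_eq (μ : ℝ) (z : ℂ) (a b : Polynomial ℝ) :
    eval z ((μ • b + (1 - μ) • a).map (algebraMap ℝ ℂ))
      = (μ : ℂ) * (aeval z b) + (1 - (μ : ℂ)) * aeval z a := by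
  rw [eval_map, ← aeval_def]
  simp [map_add, map_smul, Complex.real_smul]

private lemma aux_monic (n : ℕ) (a b : Polynomial ℝ)
    (haM : a.Monic) (hbM : b.Monic) (hna : a.natDegree = n) (hnb : b.natDegree = n) (μ : ℝ) :
    (μ • b + (1 - μ) • a).Monic ∧ (μ • b + (1 - μ) • a).natDegree = n := by
  have hca : a.coeff n = 1 := by rw [← hna]; exact haM.coeff_natDegree
  have hcb : b.coeff n = 1 := by rw [← hnb]; exact hbM.coeff_natDegree
  have hcoeff : (μ • b + (1 - μ) • a).coeff n = 1 := by
    rw [coeff_add, coeff_smul, coeff_smul, smul_eq_mul, smul_eq_mul, hca, hcb]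
    ring
  have hle : (μ • b + (1 - μ) • a).natDegree ≤ n :=
    (natDegree_add_le _ _).trans
      (max_le ((natDegree_smul_le _ _).trans hnb.le) ((natDegree_smul_le _ _).trans hna.le))
  have hge : n ≤ (μ • b + (1 - μ) • a).natDegree :=
    le_natDegree_of_ne_zero (by rw [hcoeff]; exact one_ne_zero)
  have hdeg : (μ • b + (1 - μ) • a).natDegree = n := le_antisymm hle hge
  refine ⟨?_, hdeg⟩
  unfold Monic leadingCoeff
  rw [hdeg, hcoeff]

/-- positivity of `Re (c(iω) * conj (q(iω)))` for an SPR pair. -/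
private lemma aux_pos (c q : Polynomial ℝ) (hq : Hurwitz q)
    (hspr : ∀ ω : ℝ, 0 < (evalI c ω / evalI q ω).re) (ω : ℝ) :
    0 < (evalI c ω * (starRingEnd ℂ) (evalI q ω)).re := by
  have hq0 : evalI q ω ≠ 0 := by
    intro h
    have := hq ((ω : ℂ) * Complex.I) (by rwa [IsRoot, eval_map, ← aeval_def])
    simp at this
  have key : evalI c ω * (starRingEnd ℂ) (evalI q ω)
      = (evalI c ω / evalI q ω) * ((Complex.normSq (evalI q ω) : ℝ) : ℂ) := by
    rw [← Complex.mul_conj]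
    field_simp
  rw [key]
  have : ((evalI c ω / evalI q ω) * ((Complex.normSq (evalI q ω) : ℝ) : ℂ)).re
      = (evalI c ω / evalI q ω).re * Complex.normSq (evalI q ω) := by
    simp [Complex.mul_re]
  rw [this]
  exact mul_pos (hspr ω) (Complex.normSq_pos.2 hq0)

/-- no convex combination vanishes on the imaginary axis. -/
private lemma aux_axis (a b c : Polynomial ℝ) (hca : SPR c a) (hcb : SPR c b)
    (μ : ℝ) (hμ : μ ∈ Set.Icc (0 : ℝ) 1) (z : ℂ) (hz : z.re = 0) :
    eval z ((μ • b + (1 - μ) • a).map (algebraMap ℝ ℂ)) ≠ 0 := by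
  obtain ⟨-, haH, hsa⟩ := hca
  obtain ⟨-, hbH, hsb⟩ := hcb
  intro h0
  set ω := z.im with hω
  have hz' : z = (ω : ℂ) * Complex.I := by
    apply Complex.ext <;> simp [hz, hω]
  rw [aux_eval_eq, hz'] at h0
  have hA := aux_pos c a haH hsa ω
  have hB := aux_pos c b hbH hsb ω
  have key := congrArg (fun w => (evalI c ω * (starRingEnd ℂ) w).re) h0
  simp only [evalI, aeval_def, ← eval_map] at key hA hB
  set Av := eval ((ω : ℂ) * Complex.I) (a.map (algebraMap ℝ ℂ))
  set Bv := eval ((ω : ℂ) * Complex.I) (b.map (algebraMap ℝ ℂ))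
  set Cv := eval ((ω : ℂ) * Complex.I) (c.map (algebraMap ℝ ℂ))
  have expand : (Cv * (starRingEnd ℂ) ((μ : ℂ) * Bv + (1 - (μ : ℂ)) * Av)).re
      = μ * (Cv * (starRingEnd ℂ) Bv).re + (1 - μ) * (Cv * (starRingEnd ℂ) Av).re := by
    rw [map_add, map_mul, map_mul, mul_add]
    rw [show (starRingEnd ℂ) (μ : ℂ) = (μ : ℂ) from Complex.conj_ofReal μ,
      show (starRingEnd ℂ) (1 - (μ : ℂ)) = ((1 - μ : ℝ) : ℂ) by
        simp [map_sub, Complex.conj_ofReal]]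
    rw [mul_left_comm Cv, mul_left_comm Cv, Complex.add_re,
      Complex.re_ofReal_mul, Complex.re_ofReal_mul]
  rw [expand] at key
  simp only [map_zero, mul_zero, Complex.zero_re] at key
  obtain ⟨hμ0, hμ1⟩ := hμ
  rcases eq_or_lt_of_le hμ0 with h | h
  · rw [← h] at key; linarith
  · have h1 := mul_pos h hB
    have h2 := mul_nonneg (sub_nonneg.2 hμ1) hA.le
    linarith

theorem stmt_2 (n : ℕ) (a b : Polynomial ℝ)
    (haM : a.Monic) (hbM : b.Monic)
    (hna : a.natDegree = n) (hnb : b.natDegree = n)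
    (haH : Hurwitz a) (hbH : Hurwitz b)
    (hex : ∃ c : Polynomial ℝ, SPR c a ∧ SPR c b) :
    ∀ μ : ℝ, μ ∈ Set.Icc (0 : ℝ) 1 → Hurwitz (μ • b + (1 - μ) • a) := by
  obtain ⟨c, hca, hcb⟩ := hex
  have hmon := aux_monic n a b haM hbM hna hnb
  rcases Nat.eq_zero_or_pos n with hn0 | hn
  · intro μ _ z hz
    have h1 : μ • b + (1 - μ) • a = 1 :=
      (hmon μ).1.natDegree_eq_zero.1 (by rw [(hmon μ).2, hn0])
    rw [h1] at hz
    simp [IsRoot] at hz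
  -- main case `n ≥ 1`
  set V : Set ℝ := {μ : ℝ | ∃ z : ℂ, 0 < z.re ∧
      eval z ((μ • b + (1 - μ) • a).map (algebraMap ℝ ℂ)) = 0} with hV
  -- V is open
  have hVopen : IsOpen V := by
    rw [Metric.isOpen_iff]
    rintro μ0 ⟨r, hr, hroot⟩
    set D : ℝ := ‖aeval r b - aeval r a‖ with hD
    refine ⟨r.re ^ n / (D + 1), by positivity, ?_⟩
    intro μ hμball
    rw [Metric.mem_ball, Real.dist_eq] at hμball
    have heval : ‖eval r ((μ • b + (1 - μ) • a).map (algebraMap ℝ ℂ))‖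
        = |μ - μ0| * D := by
      rw [aux_eval_eq] at hroot ⊢
      have : (μ : ℂ) * (aeval r b) + (1 - (μ : ℂ)) * aeval r a
          = ((μ - μ0 : ℝ) : ℂ) * (aeval r b - aeval r a)
            + ((μ0 : ℂ) * (aeval r b) + (1 - (μ0 : ℂ)) * aeval r a) := by
        push_cast
        ring
      rw [this, hroot, add_zero, norm_mul, hD, Complex.norm_real, Real.norm_eq_abs]
    have hsmall : ‖eval r ((μ • b + (1 - μ) • a).map (algebraMap ℝ ℂ))‖ < r.re ^ n := by
      rw [heval]
      have hD0 : (0:ℝ) ≤ D := norm_nonneg _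
      calc |μ - μ0| * D ≤ |μ - μ0| * (D + 1) := by
            apply mul_le_mul_of_nonneg_left (by linarith) (abs_nonneg _)
        _ < (r.re ^ n / (D + 1)) * (D + 1) := by
            apply mul_lt_mul_of_pos_right hμball (by linarith)
        _ = r.re ^ n := div_mul_cancel₀ _ (by linarith)
    have hdeg : ((μ • b + (1 - μ) • a).map (algebraMap ℝ ℂ)).natDegree = n := by
      rw [(hmon μ).1.natDegree_map, (hmon μ).2]
    obtain ⟨z, hzroot, hznear⟩ :=
      aux_near_root ((μ • b + (1 - μ) • a).map (algebraMap ℝ ℂ)) ((hmon μ).1.map _) r r.re hr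
        (by rw [hdeg]; exact hsmall)
    refine ⟨z, ?_, hzroot⟩
    have h1 : r.re - z.re ≤ ‖r - z‖ := by
      calc r.re - z.re = (r - z).re := by simp
        _ ≤ |(r - z).re| := le_abs_self _
        _ ≤ ‖r - z‖ := Complex.abs_re_le_norm _
    linarith
  -- Icc ∩ V is closed
  have hCclosed : IsClosed (Set.Icc (0:ℝ) 1 ∩ V) := by
    rw [← isSeqClosed_iff_isClosed]
    intro x ν hx hlim
    have hIcc : ν ∈ Set.Icc (0:ℝ) 1 :=
      isClosed_Icc.mem_of_tendsto hlim (Filter.Eventually.of_forall fun k => (hx k).1)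
    refine ⟨hIcc, ?_⟩
    choose z hzre hzroot using fun k => (hx k).2
    -- uniform bound on roots via cauchyBound
    set K : NNReal := (Finset.range n).sup (fun i => ‖a.coeff i‖₊ + ‖b.coeff i‖₊) + 1 with hK
    have hbound : ∀ k, z k ∈ Metric.closedBall (0:ℂ) K := by
      intro k
      set q := ((x k) • b + (1 - x k) • a) with hq
      have hq0 : q.map (algebraMap ℝ ℂ) ≠ 0 := ((hmon (x k)).1.map _).ne_zero
      have hroot : (q.map (algebraMap ℝ ℂ)).IsRoot (z k) := hzroot k
      have hlt := hroot.norm_lt_cauchyBound hq0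
      have hKb : cauchyBound (q.map (algebraMap ℝ ℂ)) ≤ K := by
        rw [cauchyBound]
        have hlc : (q.map (algebraMap ℝ ℂ)).leadingCoeff = 1 := ((hmon (x k)).1.map _)
        rw [hlc]
        simp only [nnnorm_one, div_one]
        rw [hK]
        have hdeg : (q.map (algebraMap ℝ ℂ)).natDegree = n := by
          rw [(hmon (x k)).1.natDegree_map, (hmon (x k)).2]
        rw [hdeg]
        apply add_le_add_left
        refine Finset.sup_le fun i hi => ?_
        · refine le_trans ?_ (Finset.le_sup (f := fun i => ‖a.coeff i‖₊ + ‖b.coeff i‖₊) hi)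
          rw [coeff_map]
          have : ‖algebraMap ℝ ℂ (q.coeff i)‖₊ = ‖q.coeff i‖₊ := by
            simp [Complex.nnnorm_real]
          rw [this, hq, coeff_add, coeff_smul, coeff_smul, smul_eq_mul, smul_eq_mul]
          refine (nnnorm_add_le _ _).trans ?_
          rw [nnnorm_mul, nnnorm_mul]
          have h1 : ‖x k‖₊ ≤ 1 := by
            rw [← NNReal.coe_le_coe]
            simp only [coe_nnnorm, Real.norm_eq_abs, NNReal.coe_one]
            rw [abs_of_nonneg (hx k).1.1]
            exact (hx k).1.2
          have h2 : ‖1 - x k‖₊ ≤ 1 := by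
            rw [← NNReal.coe_le_coe]
            simp only [coe_nnnorm, Real.norm_eq_abs, NNReal.coe_one]
            rw [abs_of_nonneg (by linarith [(hx k).1.2])]
            linarith [(hx k).1.1]
          calc ‖x k‖₊ * ‖b.coeff i‖₊ + ‖1 - x k‖₊ * ‖a.coeff i‖₊
              ≤ 1 * ‖b.coeff i‖₊ + 1 * ‖a.coeff i‖₊ := by
                exact add_le_add (mul_le_mul_left h1 _) (mul_le_mul_left h2 _)
            _ = ‖a.coeff i‖₊ + ‖b.coeff i‖₊ := by ring
      rw [Metric.mem_closedBall, dist_zero_right]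
      calc ‖z k‖ = (‖z k‖₊ : ℝ) := rfl
        _ ≤ (cauchyBound (q.map (algebraMap ℝ ℂ)) : ℝ) := by exact_mod_cast hlt.le
        _ ≤ (K : ℝ) := by exact_mod_cast hKb
    obtain ⟨w, -, φ, hφ, hzlim⟩ :=
      (isCompact_closedBall (0:ℂ) K).tendsto_subseq hbound
    -- the limit is a root with nonneg real part
    have hG : Continuous fun q : ℝ × ℂ =>
        (q.1 : ℂ) * (aeval q.2 b) + (1 - (q.1 : ℂ)) * aeval q.2 a := by
      have h1 : Continuous fun q : ℝ × ℂ => ((q.1 : ℝ) : ℂ) :=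
        Complex.continuous_ofReal.comp continuous_fst
      have h2 : Continuous fun q : ℝ × ℂ => aeval q.2 b :=
        (b.continuous_aeval).comp continuous_snd
      have h3 : Continuous fun q : ℝ × ℂ => aeval q.2 a :=
        (a.continuous_aeval).comp continuous_snd
      continuity
    have hpair : Filter.Tendsto (fun k => (x (φ k), z (φ k))) Filter.atTop
        (nhds (ν, w)) :=
      ((hlim.comp hφ.tendsto_atTop).prodMk_nhds hzlim)
    have hGlim : Filter.Tendsto
        (fun k => (x (φ k) : ℂ) * (aeval (z (φ k)) b) + (1 - (x (φ k) : ℂ)) * aeval (z (φ k)) a)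
        Filter.atTop (nhds ((ν : ℂ) * (aeval w b) + (1 - (ν : ℂ)) * aeval w a)) :=
      (hG.tendsto _).comp hpair
    have hGzero : ∀ k, (x (φ k) : ℂ) * (aeval (z (φ k)) b)
        + (1 - (x (φ k) : ℂ)) * aeval (z (φ k)) a = 0 := by
      intro k
      have h : eval (z (φ k)) (((x (φ k)) • b + (1 - x (φ k)) • a).map (algebraMap ℝ ℂ)) = 0 :=
        hzroot (φ k)
      rwa [aux_eval_eq] at h
    have hrootlim : (ν : ℂ) * (aeval w b) + (1 - (ν : ℂ)) * aeval w a = 0 := by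
      have : Filter.Tendsto (fun _ : ℕ => (0:ℂ)) Filter.atTop (nhds 0) := tendsto_const_nhds
      exact tendsto_nhds_unique (by simpa only [hGzero] using hGlim) this
    have hre : 0 ≤ w.re := by
      have : Filter.Tendsto (fun k => (z (φ k)).re) Filter.atTop (nhds w.re) :=
        (Complex.continuous_re.tendsto _).comp hzlim
      exact le_of_tendsto_of_tendsto' tendsto_const_nhds this fun k => (hzre (φ k)).le
    rcases eq_or_lt_of_le hre with h | h
    · exact absurd (by rw [aux_eval_eq]; exact hrootlim)
        (aux_axis a b c hca hcb ν hIcc w h.symm)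
    · exact ⟨w, h, by rw [aux_eval_eq]; exact hrootlim⟩
  -- connectedness argument on the subtype
  have hVempty : ∀ μ ∈ Set.Icc (0:ℝ) 1, μ ∉ V := by
    by_contra hcon
    push_neg at hcon
    obtain ⟨μ1, hμ1, hμ1V⟩ := hcon
    set S : Set (Set.Icc (0:ℝ) 1) := Subtype.val ⁻¹' V with hS
    have hSopen : IsOpen S := hVopen.preimage continuous_subtype_val
    have hSclosed : IsClosed S := by
      have : S = Subtype.val ⁻¹' (Set.Icc (0:ℝ) 1 ∩ V) := by
        ext ⟨x, hx⟩
        simp [hS, hx]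
      rw [this]
      exact hCclosed.preimage continuous_subtype_val
    have : ConnectedSpace (Set.Icc (0:ℝ) 1) :=
      Subtype.connectedSpace ⟨⟨0, by norm_num⟩, isPreconnected_Icc⟩
    rcases isClopen_iff.1 ⟨hSclosed, hSopen⟩ with h | h
    · have : (⟨μ1, hμ1⟩ : Set.Icc (0:ℝ) 1) ∈ S := hμ1V
      rw [h] at this
      exact this
    · have h0 : (⟨0, by norm_num⟩ : Set.Icc (0:ℝ) 1) ∈ S := by rw [h]; trivial
      obtain ⟨z, hzre, hzroot⟩ := h0
      have : ((0:ℝ) • b + (1 - (0:ℝ)) • a) = a := by simp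
      rw [this] at hzroot
      exact absurd (haH z hzroot) (by linarith)
  -- conclude
  intro μ hμ z hz
  by_contra hlt
  push_neg at hlt
  rcases eq_or_lt_of_le hlt with h | h
  · exact aux_axis a b c hca hcb μ hμ z h.symm hz
  · exact hVempty μ hμ ⟨z, h, hz⟩
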